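/- Let A be a Banach algebra with a right unit, and A = B ⊕ I as above with A·I = {0}. Let π : A → B be the projection homomorphism, J a closed two-sided ideal of B, and D : B → J* a continuous derivation. Then the map D̄ = (π|_{J⊕I})* ∘ D ∘ π : A → (J ⊕ I)* is a continuous derivation. -/

import Mathlib

open NormedSpace

noncomputable section

variable {A : Type*} [NonUnitalNormedRing A] [NormedSpace ℂ A]
  [IsScalarTower ℂ A A] [SMulCommClass ℂ A A]

/-- A closed two-sided ideal of a Banach algebra, given as a closed submodule
stable under left and right multiplication. -/
structure IsClosedTwoSidedIdeal (I : Submodule ℂ A) : Prop where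
  isClosed : IsClosed (I : Set A)
  mul_left : ∀ (a : A) ⦃x : A⦄, x ∈ I → a * x ∈ I
  mul_right : ∀ (a : A) ⦃x : A⦄, x ∈ I → x * a ∈ I

/-- `D : A → I*` is a derivation for the canonical dual bimodule structure:
`⟨a·f, i⟩ = ⟨f, i a⟩` and `⟨f·a, i⟩ = ⟨f, a i⟩`, so that
`D(ab) = a·D(b) + D(a)·b` reads pointwise as below. -/
def IsIdealDerivation (I : Submodule ℂ A) (hI : IsClosedTwoSidedIdeal I)
    (D : A →L[ℂ] StrongDual ℂ I) : Prop :=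
  ∀ a b : A, ∀ i : I, D (a * b) i =
    D b ⟨(i : A) * a, hI.mul_right a i.2⟩ + D a ⟨b * (i : A), hI.mul_left b i.2⟩

/-- `D : A → I*` is inner: `D = δ_ξ`, i.e. `D a = a·ξ - ξ·a`. -/
def IsInnerIdealDerivation (I : Submodule ℂ A) (hI : IsClosedTwoSidedIdeal I)
    (D : A →L[ℂ] StrongDual ℂ I) : Prop :=
  ∃ ξ : StrongDual ℂ I, ∀ (a : A) (i : I),
    D a i = ξ ⟨(i : A) * a, hI.mul_right a i.2⟩ - ξ ⟨a * (i : A), hI.mul_left a i.2⟩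

/-- `A` is ideally amenable: for every closed two-sided ideal `I`,
every continuous derivation `A → I*` is inner. -/
def IdeallyAmenable (A : Type*) [NonUnitalNormedRing A] [NormedSpace ℂ A]
    [IsScalarTower ℂ A A] [SMulCommClass ℂ A A] : Prop :=
  ∀ (I : Submodule ℂ A) (hI : IsClosedTwoSidedIdeal I) (D : A →L[ℂ] StrongDual ℂ I),
    IsIdealDerivation I hI D → IsInnerIdealDerivation I hI D

/-- In the setting `A = B ⊕ I` (with `A·I = {0}`, `π : A → B`
the projection homomorphism, `J` a closed two-sided ideal of `B`, and
`D : B → J*` a continuous derivation), the lifted map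
`D̄ = (π|_{J⊕I})* ∘ D ∘ π : A → (J ⊕ I)*`, given by
`⟨D̄ a, z⟩ = ⟨D(π a), π z⟩`, is a continuous derivation. -/
theorem lifted_derivation [CompleteSpace A]
    (B I : Submodule ℂ A)
    (hBclosed : IsClosed (B : Set A))
    (hBmul : ∀ x ∈ B, ∀ y ∈ B, x * y ∈ B)
    (hBunit : ∃ u ∈ B, ∀ b ∈ B, u * b = b ∧ b * u = b)
    (hI : IsClosedTwoSidedIdeal I)
    (hann : ∀ a : A, ∀ i ∈ I, a * i = 0)
    (hsum : ∀ a : A, ∃ b ∈ B, ∃ i ∈ I, a = b + i)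
    (hdisj : ∀ x : A, x ∈ B → x ∈ I → x = 0)
    (hrunit : ∃ e : A, ∀ x : A, x * e = x)
    (J : Submodule ℂ A) (hJB : J ≤ B) (hJclosed : IsClosed (J : Set A))
    (hJideal : ∀ b ∈ B, ∀ j ∈ J, b * j ∈ J ∧ j * b ∈ J)
    (hK : IsClosedTwoSidedIdeal (J ⊔ I : Submodule ℂ A))
    (π : A →L[ℂ] A)
    (hπ : ∀ b ∈ B, ∀ i ∈ I, π (b + i) = b)
    (hπB : ∀ a : A, π a ∈ B)
    (hπJ : ∀ z : A, z ∈ (J ⊔ I : Submodule ℂ A) → π z ∈ J)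
    (D : B →L[ℂ] StrongDual ℂ J)
    (hD : ∀ b b' : B, ∀ j : J,
      D ⟨(b : A) * (b' : A), hBmul b b.2 b' b'.2⟩ j =
        D b' ⟨(j : A) * (b : A), (hJideal b b.2 j j.2).2⟩ +
          D b ⟨(b' : A) * (j : A), (hJideal b' b'.2 j j.2).1⟩) :
    ∃ Dbar : A →L[ℂ] StrongDual ℂ (J ⊔ I : Submodule ℂ A),
      (∀ (a : A) (z : (J ⊔ I : Submodule ℂ A)),
        Dbar a z = D ⟨π a, hπB a⟩ ⟨π z, hπJ z z.2⟩) ∧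
      IsIdealDerivation (J ⊔ I : Submodule ℂ A) hK Dbar := by
  classical
  -- π fixes B and kills I
  have hres : ∀ a : A, a - π a ∈ I := fun a => by
    obtain ⟨b, hb, i, hi, rfl⟩ := hsum a
    rw [hπ b hb i hi]
    simpa using hi
  -- π is multiplicative
  have hπmul : ∀ a c : A, π (a * c) = π a * π c := by
    intro a c
    have h0 : a * (c - π c) = 0 := hann a _ (hres c)
    have h1 : a * c = π a * π c + (a - π a) * π c := by
      have : a * c = a * π c := by
        have := sub_eq_zero.mp (by simpa [mul_sub] using h0)
        simpa using this
      rw [this, sub_mul]; abel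
    rw [h1, hπ (π a * π c) (hBmul _ (hπB a) _ (hπB c)) _
      (hI.mul_right (π c) (hres a))]
  set K : Submodule ℂ A := (J ⊔ I : Submodule ℂ A) with hKdef
  let ρ : K →L[ℂ] J :=
    ContinuousLinearMap.codRestrict (π.comp K.subtypeL) J (fun z => hπJ z z.2)
  let πB : A →L[ℂ] B := ContinuousLinearMap.codRestrict π B hπB
  let Dbar : A →L[ℂ] StrongDual ℂ K :=
    (((ContinuousLinearMap.compL ℂ ↥K ↥J ℂ).flip ρ).comp (D.comp πB))
  have hform : ∀ (a : A) (z : K),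
      Dbar a z = D ⟨π a, hπB a⟩ ⟨π z, hπJ z z.2⟩ := fun a z => rfl
  refine ⟨Dbar, hform, ?_⟩
  intro a b z
  rw [hform, hform, hform]
  have e1 : (⟨π (a * b), hπB _⟩ : B)
      = ⟨π a * π b, hBmul _ (hπB a) _ (hπB b)⟩ := Subtype.ext (hπmul a b)
  have e2 : (⟨π ((z : A) * a), hπJ _ (hK.mul_right a z.2)⟩ : J)
      = ⟨π (z : A) * π a, (hJideal _ (hπB a) _ (hπJ z z.2)).2⟩ :=
    Subtype.ext (hπmul (z : A) a)
  have e3 : (⟨π (b * (z : A)), hπJ _ (hK.mul_left b z.2)⟩ : J)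
      = ⟨π b * π (z : A), (hJideal _ (hπB b) _ (hπJ z z.2)).1⟩ :=
    Subtype.ext (hπmul b (z : A))
  rw [e1, e2, e3]
  exact hD ⟨π a, hπB a⟩ ⟨π b, hπB b⟩ ⟨π z, hπJ z z.2⟩
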